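/- Consider K users with channel gains h₁,…,h_K > 0, noise power σ² > 0, processing gain N ≥ 1, and matched-filter output SIRs γ_k(p) = N p_k h_k² / (N σ² + ∑_{j≠k} p_j h_j²). Given target SIRs γ̃₁,…,γ̃_K > 0, if S := ∑_{k=1}^K γ̃_k/(N + γ̃_k) < 1 (equivalently ∑_k 1/(1 + N/γ̃_k) < 1), then there exists a unique vector of positive powers (p₁,…,p_K) with γ_k(p) = γ̃_k for all k, given explicitly by p_k = (1/h_k²) · N γ̃_k σ² / ((N + γ̃_k)(1 − S)). -/

import Mathlib

open Finset

/-- Matched-filter output SIR of user `k` at power profile `p`: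
`γ_k(p) = N p_k h_k² / (N σ² + ∑_{j≠k} p_j h_j²)`. -/
noncomputable def mfSIR (K : ℕ) (N σ : ℝ) (h : Fin K → ℝ) (p : Fin K → ℝ)
    (k : Fin K) : ℝ :=
  N * p k * (h k) ^ 2 / (N * σ ^ 2 + ∑ j ∈ univ.erase k, p j * (h j) ^ 2)

/-- If `S = ∑_k γ̃_k/(N + γ̃_k) < 1`, then there is a unique vector of
positive powers achieving `γ_k(p) = γ̃_k` for all `k`, given explicitly by
`p_k = (1/h_k²) · N γ̃_k σ² / ((N + γ̃_k)(1 − S))`. -/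
theorem mf_power_control_feasible (K : ℕ) (N σ : ℝ) (hN : 1 ≤ N) (hσ : 0 < σ)
    (h : Fin K → ℝ) (hh : ∀ k, 0 < h k)
    (γt : Fin K → ℝ) (hγt : ∀ k, 0 < γt k)
    (hS : ∑ k, γt k / (N + γt k) < 1) :
    (∀ k, 0 < (1 / (h k) ^ 2) *
        (N * γt k * σ ^ 2 / ((N + γt k) * (1 - ∑ j, γt j / (N + γt j))))) ∧
    (∀ k, mfSIR K N σ h
        (fun j => (1 / (h j) ^ 2) *
          (N * γt j * σ ^ 2 / ((N + γt j) * (1 - ∑ i, γt i / (N + γt i))))) k = γt k) ∧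
    (∀ q : Fin K → ℝ, (∀ k, 0 < q k) → (∀ k, mfSIR K N σ h q k = γt k) →
        q = fun j => (1 / (h j) ^ 2) *
          (N * γt j * σ ^ 2 / ((N + γt j) * (1 - ∑ i, γt i / (N + γt i))))) := by
  have hN0 : (0:ℝ) < N := lt_of_lt_of_le one_pos hN
  set S : ℝ := ∑ i, γt i / (N + γt i) with hSdef
  have hNk : ∀ k, 0 < N + γt k := fun k => add_pos hN0 (hγt k)
  have h1S : 0 < 1 - S := sub_pos.mpr hS
  have hA : ∀ k, 0 < N * γt k * σ ^ 2 / ((N + γt k) * (1 - S)) := fun k => by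
    have h1 := hγt k; have h2 := hNk k
    exact div_pos (by positivity) (mul_pos h2 h1S)
  have hpos : ∀ k, 0 < (1 / (h k) ^ 2) *
      (N * γt k * σ ^ 2 / ((N + γt k) * (1 - S))) := fun k =>
    mul_pos (by have := hh k; positivity) (hA k)
  have hterm : ∀ j : Fin K,
      ((1 / (h j) ^ 2) * (N * γt j * σ ^ 2 / ((N + γt j) * (1 - S)))) * (h j) ^ 2
        = N * γt j * σ ^ 2 / ((N + γt j) * (1 - S)) := by
    intro j
    have hj : (h j) ^ 2 ≠ 0 := by have := hh j; positivity
    rw [mul_right_comm, one_div_mul_cancel hj, one_mul]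
  have hsumA : ∑ j, N * γt j * σ ^ 2 / ((N + γt j) * (1 - S))
      = N * σ ^ 2 * S / (1 - S) := by
    calc ∑ j, N * γt j * σ ^ 2 / ((N + γt j) * (1 - S))
        = ∑ j, (N * σ ^ 2 / (1 - S)) * (γt j / (N + γt j)) := by
          refine Finset.sum_congr rfl fun j _ => ?_
          have h1 : N + γt j ≠ 0 := ne_of_gt (hNk j)
          have h2 : (1 - S) ≠ 0 := ne_of_gt h1S
          field_simp
      _ = (N * σ ^ 2 / (1 - S)) * S := (Finset.mul_sum _ _ _).symm
      _ = N * σ ^ 2 * S / (1 - S) := by ring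
  refine ⟨hpos, ?_, ?_⟩
  · intro k
    unfold mfSIR
    simp only [hterm]
    rw [Finset.sum_erase_eq_sub (Finset.mem_univ k), hsumA]
    have h1 : N + γt k ≠ 0 := ne_of_gt (hNk k)
    have h2 : (1 - S) ≠ 0 := ne_of_gt h1S
    have hk2 : (h k) ^ 2 ≠ 0 := by have := hh k; positivity
    have hk0 : h k ≠ 0 := ne_of_gt (hh k)
    have hden : N * σ ^ 2 + (N * σ ^ 2 * S / (1 - S)
        - N * γt k * σ ^ 2 / ((N + γt k) * (1 - S)))
        = N ^ 2 * σ ^ 2 / ((1 - S) * (N + γt k)) := by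
      field_simp
      ring
    rw [hden]
    have hdne : N ^ 2 * σ ^ 2 / ((1 - S) * (N + γt k)) ≠ 0 := by positivity
    rw [div_eq_iff hdne]
    field_simp
  · intro q hq hγ
    set T : ℝ := ∑ j, q j * (h j) ^ 2 with hT
    have key : ∀ k, q k * (h k) ^ 2 = γt k * (N * σ ^ 2 + T) / (N + γt k) := by
      intro k
      have hk := hγ k
      unfold mfSIR at hk
      rw [Finset.sum_erase_eq_sub (Finset.mem_univ k)] at hk
      have hden : 0 < N * σ ^ 2 + (T - q k * (h k) ^ 2) := by
        have hTk : 0 ≤ T - q k * (h k) ^ 2 := by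
          rw [hT, ← Finset.sum_erase_eq_sub (Finset.mem_univ k)]
          exact Finset.sum_nonneg fun j _ =>
            le_of_lt (mul_pos (hq j) (by have := hh j; positivity))
        positivity
      rw [div_eq_iff (ne_of_gt hden)] at hk
      have h1 : N + γt k ≠ 0 := ne_of_gt (hNk k)
      rw [eq_div_iff h1]
      linear_combination hk
    have hTval : T = N * σ ^ 2 * S / (1 - S) := by
      have hkey : T = (N * σ ^ 2 + T) * S := by
        rw [hT]
        calc ∑ j, q j * (h j) ^ 2 = ∑ j, γt j * (N * σ ^ 2 + T) / (N + γt j) :=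
              Finset.sum_congr rfl fun j _ => key j
          _ = (N * σ ^ 2 + T) * S := by
              rw [Finset.mul_sum]
              exact Finset.sum_congr rfl fun j _ => by ring
      have h2 : (1 - S) ≠ 0 := ne_of_gt h1S
      field_simp
      linear_combination hkey
    funext k
    have hk2 : (h k) ^ 2 ≠ 0 := by have := hh k; positivity
    have hk0 : h k ≠ 0 := ne_of_gt (hh k)
    have hqk := key k
    rw [hTval] at hqk
    have h1 : N + γt k ≠ 0 := ne_of_gt (hNk k)
    have h2 : (1 - S) ≠ 0 := ne_of_gt h1S
    have hfin : q k * (h k) ^ 2 = N * γt k * σ ^ 2 / ((N + γt k) * (1 - S)) := by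
      rw [hqk]
      field_simp
      ring
    show q k = (1 / (h k) ^ 2) * (N * γt k * σ ^ 2 / ((N + γt k) * (1 - S)))
    field_simp at hfin ⊢
    linear_combination hfin
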